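/- Let R ∈ [0,1], T ∈ [0,1) and α, β ∈ ℝ. Define the Gaussian amplitude f : ℂ × ℂ → ℂ by f(γ,γ') = √(1−T²) · exp( −(|γ|² + |γ'|²)/2 + √R·α·γ + β·γ' − (α² + β²)/2 + T·(√R·γ − α)·(γ' − β) ). Then the function (γ,γ') ↦ |f(γ,γ')|² is integrable on ℂ × ℂ and (1/π²) ∫_ℂ ∫_ℂ |f(γ,γ')|² dγ dγ' = (1−T²)/(1−R·T²) · exp( −(1−R)·(1−T²)·α² / (1−R·T²) ). In particular, the value of this integral does not depend on β. -/

import Mathlib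

open MeasureTheory

private lemma exp_merge_mA (K1 K2 X Y Z : ℝ) :
    (K1 * Real.exp X) * ((K2 * Real.exp Y) * Real.exp Z)
      = (K1 * K2) * Real.exp (X + Y + Z) := by
  rw [Real.exp_add, Real.exp_add]; ring

private lemma exp_merge_mB (K W A B : ℝ) :
    ((K * Real.exp W) * Real.exp A) * Real.exp B = K * Real.exp (W + A + B) := by
  rw [Real.exp_add, Real.exp_add]; ring

private lemma gauss_lin (b d : ℝ) (hb : 0 < b) :
    Integrable (fun x : ℝ => Real.exp (-b * x ^ 2 + d * x)) ∧
    ∫ x : ℝ, Real.exp (-b * x ^ 2 + d * x)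
      = Real.sqrt (Real.pi / b) * Real.exp (d ^ 2 / (4 * b)) := by
  have h1 : (fun x : ℝ => Real.exp (-b * x ^ 2 + d * x))
      = fun x : ℝ => Real.exp (-b * (x - d / (2 * b)) ^ 2) * Real.exp (d ^ 2 / (4 * b)) := by
    funext x
    rw [← Real.exp_add]
    congr 1
    field_simp
    ring
  constructor
  · rw [h1]
    exact ((integrable_exp_neg_mul_sq hb).comp_sub_right _).mul_const _
  · rw [h1, integral_mul_const,
      integral_sub_right_eq_self (fun x => Real.exp (-b * x ^ 2)) (d / (2 * b)),
      integral_gaussian]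

private lemma gauss4 (c d e : ℝ) (hc : |c| < 1) :
    Integrable (fun q : (ℝ × ℝ) × ℝ × ℝ =>
      Real.exp (-q.1.1 ^ 2 - q.1.2 ^ 2 - q.2.1 ^ 2 - q.2.2 ^ 2
        + 2 * c * q.1.1 * q.2.1 - 2 * c * q.1.2 * q.2.2 + d * q.1.1 + e * q.2.1)) ∧
    ∫ q : (ℝ × ℝ) × ℝ × ℝ, Real.exp (-q.1.1 ^ 2 - q.1.2 ^ 2 - q.2.1 ^ 2 - q.2.2 ^ 2
        + 2 * c * q.1.1 * q.2.1 - 2 * c * q.1.2 * q.2.2 + d * q.1.1 + e * q.2.1)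
      = Real.pi ^ 2 / (1 - c ^ 2)
        * Real.exp ((d ^ 2 + 2 * c * d * e + e ^ 2) / (4 * (1 - c ^ 2))) := by
  have hb : 0 < 1 - |c| := by linarith
  have hc2 : 0 < 1 - c ^ 2 := by nlinarith [sq_abs c, abs_nonneg c]
  have key : ∀ a t : ℝ, 2 * c * a * t ≤ |c| * (a ^ 2 + t ^ 2) := by
    intro a t
    have h1 : 2 * c * a * t ≤ |2 * c * a * t| := le_abs_self _
    have h2 : |2 * c * a * t| = 2 * |c| * |a| * |t| := by
      rw [abs_mul, abs_mul, abs_mul]; norm_num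
    nlinarith [sq_nonneg (|a| - |t|), sq_abs a, sq_abs t, abs_nonneg c]
  have hA := (gauss_lin (1 - |c|) d hb).1
  have hB : Integrable (fun x : ℝ => Real.exp (-(1 - |c|) * x ^ 2 + 0 * x)) :=
    (gauss_lin (1 - |c|) 0 hb).1
  have hE := (gauss_lin (1 - |c|) e hb).1
  have hP : Integrable (fun q : (ℝ × ℝ) × ℝ × ℝ =>
      (Real.exp (-(1 - |c|) * q.1.1 ^ 2 + d * q.1.1) * Real.exp (-(1 - |c|) * q.1.2 ^ 2 + 0 * q.1.2)) *
      (Real.exp (-(1 - |c|) * q.2.1 ^ 2 + e * q.2.1) * Real.exp (-(1 - |c|) * q.2.2 ^ 2 + 0 * q.2.2))) :=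
    (hA.mul_prod hB).mul_prod (hE.mul_prod hB)
  have hint : Integrable (fun q : (ℝ × ℝ) × ℝ × ℝ =>
      Real.exp (-q.1.1 ^ 2 - q.1.2 ^ 2 - q.2.1 ^ 2 - q.2.2 ^ 2
        + 2 * c * q.1.1 * q.2.1 - 2 * c * q.1.2 * q.2.2 + d * q.1.1 + e * q.2.1)) := by
    refine hP.mono ?_ (ae_of_all _ fun q => ?_)
    · exact (Continuous.rexp (by fun_prop)).aestronglyMeasurable
    · rw [Real.norm_eq_abs, Real.norm_eq_abs, abs_of_pos (Real.exp_pos _), abs_of_pos (by positivity)]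
      rw [← Real.exp_add, ← Real.exp_add, ← Real.exp_add]
      refine Real.exp_le_exp.mpr ?_
      have k1 := key q.1.1 q.2.1
      have k2 := key q.1.2 (-q.2.2)
      nlinarith [k1, k2]
  refine ⟨hint, ?_⟩
  rw [Measure.volume_eq_prod, integral_prod _ (by rw [← Measure.volume_eq_prod]; exact hint)]
  have inner : ∀ p : ℝ × ℝ, (∫ r : ℝ × ℝ, Real.exp (-p.1 ^ 2 - p.2 ^ 2 - r.1 ^ 2 - r.2 ^ 2
        + 2 * c * p.1 * r.1 - 2 * c * p.2 * r.2 + d * p.1 + e * r.1))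
      = (Real.sqrt (Real.pi / 1) * Real.exp ((2 * c * p.1 + e) ^ 2 / (4 * 1))) *
        ((Real.sqrt (Real.pi / 1) * Real.exp ((-(2 * c * p.2)) ^ 2 / (4 * 1))) *
          Real.exp (-p.1 ^ 2 - p.2 ^ 2 + d * p.1)) := by
    intro p
    have hrw : (fun r : ℝ × ℝ => Real.exp (-p.1 ^ 2 - p.2 ^ 2 - r.1 ^ 2 - r.2 ^ 2
        + 2 * c * p.1 * r.1 - 2 * c * p.2 * r.2 + d * p.1 + e * r.1))
        = fun r : ℝ × ℝ => Real.exp (-1 * r.1 ^ 2 + (2 * c * p.1 + e) * r.1) *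
            (Real.exp (-1 * r.2 ^ 2 + (-(2 * c * p.2)) * r.2) *
              Real.exp (-p.1 ^ 2 - p.2 ^ 2 + d * p.1)) := by
      funext r
      rw [← Real.exp_add, ← Real.exp_add]
      congr 1
      ring
    rw [hrw]
    refine (integral_prod_mul (μ := volume) (ν := volume)
        (fun x : ℝ => Real.exp (-1 * x ^ 2 + (2 * c * p.1 + e) * x))
        (fun y : ℝ => Real.exp (-1 * y ^ 2 + (-(2 * c * p.2)) * y) *
          Real.exp (-p.1 ^ 2 - p.2 ^ 2 + d * p.1))).trans ?_
    rw [integral_mul_const, (gauss_lin 1 (2 * c * p.1 + e) one_pos).2,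
      (gauss_lin 1 (-(2 * c * p.2)) one_pos).2]
  simp only [inner]
  have hrw2 : (fun p : ℝ × ℝ => (Real.sqrt (Real.pi / 1) * Real.exp ((2 * c * p.1 + e) ^ 2 / (4 * 1))) *
        ((Real.sqrt (Real.pi / 1) * Real.exp ((-(2 * c * p.2)) ^ 2 / (4 * 1))) *
          Real.exp (-p.1 ^ 2 - p.2 ^ 2 + d * p.1)))
      = fun p : ℝ × ℝ =>
          (Real.sqrt (Real.pi / 1) * Real.sqrt (Real.pi / 1) * Real.exp (e ^ 2 / 4) *
            Real.exp (-(1 - c ^ 2) * p.1 ^ 2 + (2 * c * e / 2 + d) * p.1)) *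
          Real.exp (-(1 - c ^ 2) * p.2 ^ 2 + 0 * p.2) := by
    funext p
    rw [exp_merge_mA, exp_merge_mB]
    congr 1
    rw [Real.exp_eq_exp]
    ring
  rw [hrw2]
  refine (integral_prod_mul (μ := volume) (ν := volume)
      (fun x : ℝ => Real.sqrt (Real.pi / 1) * Real.sqrt (Real.pi / 1) * Real.exp (e ^ 2 / 4) *
        Real.exp (-(1 - c ^ 2) * x ^ 2 + (2 * c * e / 2 + d) * x))
      (fun y : ℝ => Real.exp (-(1 - c ^ 2) * y ^ 2 + 0 * y))).trans ?_
  rw [integral_const_mul, (gauss_lin (1 - c ^ 2) (2 * c * e / 2 + d) hc2).2,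
    (gauss_lin (1 - c ^ 2) 0 hc2).2]
  have s1 : Real.sqrt (Real.pi / 1) * Real.sqrt (Real.pi / 1) = Real.pi := by
    rw [div_one]; exact Real.mul_self_sqrt Real.pi_nonneg
  have s2 : Real.sqrt (Real.pi / (1 - c ^ 2)) * Real.sqrt (Real.pi / (1 - c ^ 2))
      = Real.pi / (1 - c ^ 2) := Real.mul_self_sqrt (by positivity)
  rw [show (0:ℝ) ^ 2 / (4 * (1 - c ^ 2)) = 0 from by ring, Real.exp_zero, mul_one]
  rw [show Real.sqrt (Real.pi / 1) * Real.sqrt (Real.pi / 1) * Real.exp (e ^ 2 / 4) *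
      (Real.sqrt (Real.pi / (1 - c ^ 2)) *
        Real.exp ((2 * c * e / 2 + d) ^ 2 / (4 * (1 - c ^ 2)))) *
      Real.sqrt (Real.pi / (1 - c ^ 2))
    = (Real.sqrt (Real.pi / 1) * Real.sqrt (Real.pi / 1)) *
      (Real.sqrt (Real.pi / (1 - c ^ 2)) * Real.sqrt (Real.pi / (1 - c ^ 2))) *
      Real.exp (e ^ 2 / 4 + (2 * c * e / 2 + d) ^ 2 / (4 * (1 - c ^ 2))) from by
    rw [Real.exp_add]; ring]
  rw [s1, s2, show e ^ 2 / 4 + (2 * c * e / 2 + d) ^ 2 / (4 * (1 - c ^ 2))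
      = (d ^ 2 + 2 * c * d * e + e ^ 2) / (4 * (1 - c ^ 2)) from by
    field_simp; ring]
  rw [sq]
  ring


/-- Alice's marginal no-click probability of the photonic DIQKD circuit: the
Gaussian amplitude `f` has square-integrable modulus on `ℂ × ℂ` and the
normalized integral of `|f|²` equals the stated closed form, which in
particular does not depend on `β`. -/
theorem gaussian_integral_marginal_noclick
    (R T α β : ℝ) (hR0 : 0 ≤ R) (hR1 : R ≤ 1) (hT0 : 0 ≤ T) (hT1 : T < 1)
    (f : ℂ × ℂ → ℂ)
    (hf : ∀ γ γ' : ℂ, f (γ, γ') =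
      (Real.sqrt (1 - T ^ 2) : ℂ) *
        Complex.exp
          (-((‖γ‖ ^ 2 + ‖γ'‖ ^ 2 : ℝ) : ℂ) / 2
            + (Real.sqrt R : ℂ) * (α : ℂ) * γ + (β : ℂ) * γ'
            - ((α ^ 2 + β ^ 2 : ℝ) : ℂ) / 2
            + (T : ℂ) * ((Real.sqrt R : ℂ) * γ - (α : ℂ)) * (γ' - (β : ℂ)))) :
    Integrable (fun p : ℂ × ℂ => ‖f p‖ ^ 2) ∧
    (1 / Real.pi ^ 2) * ∫ p : ℂ × ℂ, ‖f p‖ ^ 2 =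
      (1 - T ^ 2) / (1 - R * T ^ 2) *
        Real.exp (-((1 - R) * (1 - T ^ 2) * α ^ 2) / (1 - R * T ^ 2)) := by
  set s : ℝ := Real.sqrt R with hs_def
  have hs2 : s ^ 2 = R := Real.sq_sqrt hR0
  have hs0 : 0 ≤ s := Real.sqrt_nonneg R
  have hs1 : s ≤ 1 := by
    rw [hs_def, show (1:ℝ) = Real.sqrt 1 from (Real.sqrt_one).symm]
    exact Real.sqrt_le_sqrt hR1
  set c : ℝ := T * s with hc_def
  set d : ℝ := 2 * s * (α - T * β) with hd_def
  set e : ℝ := 2 * (β - T * α) with he_def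
  set K : ℝ := (1 - T ^ 2) * Real.exp (2 * T * α * β - α ^ 2 - β ^ 2) with hK_def
  have hc : |c| < 1 := by
    rw [abs_of_nonneg (by positivity)]
    calc T * s ≤ T * 1 := by nlinarith
    _ < 1 := by linarith
  have hT2 : (0:ℝ) ≤ 1 - T ^ 2 := by nlinarith
  -- the pointwise identity
  have hpt : ∀ p : ℂ × ℂ, ‖f p‖ ^ 2
      = K * Real.exp (-p.1.re ^ 2 - p.1.im ^ 2 - p.2.re ^ 2 - p.2.im ^ 2
          + 2 * c * p.1.re * p.2.re - 2 * c * p.1.im * p.2.im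
          + d * p.1.re + e * p.2.re) := by
    intro p
    rw [show f p = f (p.1, p.2) from rfl, hf p.1 p.2]
    rw [norm_mul, Complex.norm_exp, Complex.norm_real, Real.norm_eq_abs, abs_of_nonneg (Real.sqrt_nonneg _),
      mul_pow, Real.sq_sqrt hT2, show ∀ w : ℝ, Real.exp w ^ 2 = Real.exp (w + w) from
        fun w => by rw [Real.exp_add, sq], hK_def,
      mul_assoc ((1:ℝ) - T ^ 2) (Real.exp (2 * T * α * β - α ^ 2 - β ^ 2)), ← Real.exp_add]
    congr 1
    rw [Real.exp_eq_exp]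
    simp only [Complex.add_re, Complex.sub_re, Complex.neg_re, Complex.mul_re, Complex.div_re,
      Complex.ofReal_re, Complex.ofReal_im, Complex.normSq_apply, Complex.sq_norm,
      Complex.re_ofNat, Complex.im_ofNat, Complex.neg_im, Complex.add_im, Complex.sub_im,
      Complex.mul_im, Complex.div_im]
    rw [hc_def, hd_def, he_def]
    ring
  -- transport to ℝ⁴
  set G : (ℝ × ℝ) × ℝ × ℝ → ℝ := fun q =>
    K * Real.exp (-q.1.1 ^ 2 - q.1.2 ^ 2 - q.2.1 ^ 2 - q.2.2 ^ 2
      + 2 * c * q.1.1 * q.2.1 - 2 * c * q.1.2 * q.2.2 + d * q.1.1 + e * q.2.1) with hG_def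
  set m : ℂ × ℂ ≃ᵐ (ℝ × ℝ) × ℝ × ℝ :=
    Complex.measurableEquivRealProd.prodCongr Complex.measurableEquivRealProd with hm_def
  have hm : MeasurePreserving m volume volume := by
    have h := Complex.volume_preserving_equiv_real_prod
    exact h.prod h
  have hG : Integrable G := (gauss4 c d e hc).1.const_mul K
  have hfun : (fun p : ℂ × ℂ => ‖f p‖ ^ 2) = G ∘ m :=
    funext fun p => hpt p
  have hGm : Integrable (G ∘ m) :=
    (hm.integrable_comp_emb m.measurableEmbedding).mpr hG
  constructor
  · rw [hfun]; exact hGm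
  · rw [hfun, show ∫ p : ℂ × ℂ, (G ∘ m) p = ∫ q, G q from
      hm.integral_comp m.measurableEmbedding G]
    rw [hG_def]
    rw [integral_const_mul, (gauss4 c d e hc).2]
    have hc2 : c ^ 2 = R * T ^ 2 := by rw [hc_def, mul_pow, hs2]; ring
    have hRT : (0:ℝ) < 1 - R * T ^ 2 := by nlinarith
    have hnum : d ^ 2 + 2 * c * d * e + e ^ 2
        = 4 * R * (α - T * β) ^ 2 + 8 * R * T * (α - T * β) * (β - T * α)
          + 4 * (β - T * α) ^ 2 := by
      rw [hc_def, hd_def, he_def, ← hs2]; ring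
    rw [hc2, hnum, hK_def]
    rw [show (4 * R * (α - T * β) ^ 2 + 8 * R * T * (α - T * β) * (β - T * α)
          + 4 * (β - T * α) ^ 2) / (4 * (1 - R * T ^ 2))
        = -((1 - R) * (1 - T ^ 2) * α ^ 2) / (1 - R * T ^ 2)
          - (2 * T * α * β - α ^ 2 - β ^ 2) from by field_simp; ring]
    rw [show -((1 - R) * (1 - T ^ 2) * α ^ 2) / (1 - R * T ^ 2)
          - (2 * T * α * β - α ^ 2 - β ^ 2)
        = -(2 * T * α * β - α ^ 2 - β ^ 2)
          + (-((1 - R) * (1 - T ^ 2) * α ^ 2) / (1 - R * T ^ 2)) from by ring,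
      Real.exp_add]
    have hπ : Real.pi ≠ 0 := Real.pi_ne_zero
    have hexpne : Real.exp (2 * T * α * β - α ^ 2 - β ^ 2) ≠ 0 := Real.exp_ne_zero _
    rw [Real.exp_neg]
    field_simp
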